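/- Let m and n be positive integers with m dividing n. If there exist two binary sequences of length m that are nontrivially equicorrelational to each other, then there exist two binary sequences of length n that are nontrivially equicorrelational to each other. -/

import Mathlib

open LaurentPolynomial
open scoped Classical

/-- The length of a Laurent polynomial: 1 plus the difference between the maximal and
minimal exponents occurring with nonzero coefficient; the length of 0 is 0. -/
noncomputable def len {F : Type*} [Field F] (f : LaurentPolynomial F) : ℤ :=
  if h : f = 0 then 0
  else f.coeff.support.max' (Finsupp.support_nonempty_iff.mpr
        fun h' => h (AddMonoidAlgebra.coeff_injective (h'.trans AddMonoidAlgebra.coeff_zero.symm)))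
     - f.coeff.support.min' (Finsupp.support_nonempty_iff.mpr
        fun h' => h (AddMonoidAlgebra.coeff_injective (h'.trans AddMonoidAlgebra.coeff_zero.symm))) + 1

/-- Substitution `f(z) ↦ f(z^m)`: the image of `f` under the ring homomorphism
sending `z` to `z^m`. -/
noncomputable def subst {F : Type*} [Field F] (m : ℤ) (f : LaurentPolynomial F) :
    LaurentPolynomial F :=
  AddMonoidAlgebra.mapDomainRingHom F (AddMonoidHom.mulLeft m) f

/-- The subring `F[z,z⁻¹]` of `E[z,z⁻¹]` consisting of Laurent polynomials all of whose
coefficients lie in the subfield `F` of `E`. -/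
noncomputable def LRing {E : Type*} [Field E] (F : Subfield E) :
    Subring (LaurentPolynomial E) where
  carrier := {f : LaurentPolynomial E | ∀ n : ℤ, f.coeff n ∈ F}
  zero_mem' := fun n => F.zero_mem
  one_mem' := by
    intro n
    rw [AddMonoidAlgebra.one_def, AddMonoidAlgebra.coeff_single, Finsupp.single_apply]
    split_ifs
    · exact F.one_mem
    · exact F.zero_mem
  add_mem' := by
    intro f g hf hg n
    rw [AddMonoidAlgebra.coeff_add, Finsupp.add_apply]
    exact add_mem (hf n) (hg n)
  neg_mem' := by
    intro f hf n
    rw [AddMonoidAlgebra.coeff_neg, Finsupp.neg_apply]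
    exact neg_mem (hf n)
  mul_mem' := by
    intro f g hf hg n
    rw [AddMonoidAlgebra.coeff_mul]
    refine sum_mem fun a ha => sum_mem fun b hb => ?_
    dsimp only
    split_ifs
    · exact mul_mem (hf a) (hg b)
    · exact zero_mem F

/-- The conjugate of `f(z) = Σ f_j z^j`, namely `f̄(z) = Σ conj(f_j) z^{-j}`. -/
noncomputable def lconj (f : LaurentPolynomial ℂ) : LaurentPolynomial ℂ :=
  AddMonoidAlgebra.ofCoeff
    (Finsupp.equivMapDomain (Equiv.neg ℤ) (Finsupp.mapRange (starRingEnd ℂ) (map_zero _) f.coeff))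

/-- `f` and `g` are equicorrelational: `f·f̄ = c·g·ḡ` for some positive real `c`. -/
def Equicorrelational (f g : LaurentPolynomial ℂ) : Prop :=
  ∃ c : ℝ, 0 < c ∧ f * lconj f = C (c : ℂ) * (g * lconj g)

/-- `f` and `g` are trivially equicorrelational: `g` is a `ℂ[z,z⁻¹]`-associate of `f`
or of `f̄`. -/
def TrivEquicorrelational (f g : LaurentPolynomial ℂ) : Prop :=
  Associated g f ∨ Associated g (lconj f)

/-- A generalized palindrome: `f̄` is a `ℂ[z,z⁻¹]`-associate of `f`. -/
def GenPalindrome (f : LaurentPolynomial ℂ) : Prop :=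
  Associated (lconj f) f

/-- `g` is an `F[z,z⁻¹]`-associate of `f`: `g = u·f` for some unit `u` of the subring
`F[z,z⁻¹]` of `ℂ[z,z⁻¹]`. -/
def FAssoc (F : Subfield ℂ) (g f : LaurentPolynomial ℂ) : Prop :=
  ∃ u : (LRing F)ˣ, g = ((u : LRing F) : LaurentPolynomial ℂ) * f

/-- The `F[z,z⁻¹]`-associate class of `f`. -/
def facl (F : Subfield ℂ) (f : LaurentPolynomial ℂ) : Set (LaurentPolynomial ℂ) :=
  {g | FAssoc F g f}

/-- The `F`-trivial equicorrelationality class of `f`: all elements of `F[z,z⁻¹]`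
that are trivially equicorrelational to `f`. -/
def fte (F : Subfield ℂ) (f : LaurentPolynomial ℂ) : Set (LaurentPolynomial ℂ) :=
  {g | g ∈ LRing F ∧ TrivEquicorrelational f g}

/-- A `k`-ary sequence: a Laurent polynomial whose support is a segment of consecutive
integers and whose nonzero coefficients are complex `k`-th roots of unity. -/
def IsKary (k : ℕ) (f : LaurentPolynomial ℂ) : Prop :=
  (∀ i j l : ℤ, i ≤ j → j ≤ l → f.coeff i ≠ 0 → f.coeff l ≠ 0 → f.coeff j ≠ 0) ∧
  ∀ n : ℤ, f.coeff n ≠ 0 → (f.coeff n) ^ k = 1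

/-- A binary sequence: a Laurent polynomial whose support is a segment of consecutive
integers and whose nonzero coefficients all lie in `{1, -1}`. -/
def IsBinary (f : LaurentPolynomial ℂ) : Prop :=
  (∀ i j l : ℤ, i ≤ j → j ≤ l → f.coeff i ≠ 0 → f.coeff l ≠ 0 → f.coeff j ≠ 0) ∧
  ∀ n : ℤ, f.coeff n ≠ 0 → f.coeff n = 1 ∨ f.coeff n = -1

lemma lconj_apply (f : LaurentPolynomial ℂ) (n : ℤ) :
    (lconj f).coeff n = (starRingEnd ℂ) (f.coeff (-n)) := by
  simp [lconj, AddMonoidAlgebra.coeff_ofCoeff, Finsupp.equivMapDomain_apply, Finsupp.mapRange_apply]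

lemma lconj_add (p q : LaurentPolynomial ℂ) : lconj (p + q) = lconj p + lconj q := by
  ext n
  rw [AddMonoidAlgebra.coeff_add, Finsupp.add_apply, lconj_apply, lconj_apply, lconj_apply,
    AddMonoidAlgebra.coeff_add, Finsupp.add_apply, map_add]

lemma lconj_zero : lconj (0 : LaurentPolynomial ℂ) = 0 := by
  ext n
  rw [lconj_apply]
  simp

lemma lconj_single (a : ℤ) (r : ℂ) :
    lconj (AddMonoidAlgebra.single a r : LaurentPolynomial ℂ) = AddMonoidAlgebra.single (-a) ((starRingEnd ℂ) r) := by
  ext n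
  rw [lconj_apply, AddMonoidAlgebra.coeff_single, AddMonoidAlgebra.coeff_single, Finsupp.single_apply,
    Finsupp.single_apply]
  by_cases h : a = -n
  · rw [if_pos h, if_pos (by omega)]
  · rw [if_neg h, if_neg (by omega), map_zero]

lemma lconj_mul (p q : LaurentPolynomial ℂ) : lconj (p * q) = lconj p * lconj q := by
  induction p using AddMonoidAlgebra.induction_linear with
  | zero => rw [zero_mul, lconj_zero, zero_mul]
  | add f g hf hg => rw [add_mul, lconj_add, lconj_add, hf, hg, add_mul]
  | single a r =>
      rw [lconj_single]
      ext n
      rw [lconj_apply, AddMonoidAlgebra.coeff_single_mul_apply, AddMonoidAlgebra.coeff_single_mul_apply,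
        map_mul, lconj_apply]
      ring_nf
lemma lconj_T (j : ℤ) : lconj (T j : LaurentPolynomial ℂ) = T (-j) := by
  rw [show (T j : LaurentPolynomial ℂ) = AddMonoidAlgebra.single j 1 from rfl, lconj_single, map_one]
  rfl

lemma lconj_sum {ι : Type*} (s : Finset ι) (F : ι → LaurentPolynomial ℂ) :
    lconj (∑ i ∈ s, F i) = ∑ i ∈ s, lconj (F i) := by
  classical
  induction s using Finset.induction_on with
  | empty => simpa using lconj_zero
  | insert _ _ h ih => rw [Finset.sum_insert h, Finset.sum_insert h, lconj_add, ih]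

/-- the spreading sequence 1 + z^M + ... + z^{(k-1)M} -/
noncomputable def sgen (k : ℕ) (M : ℤ) : LaurentPolynomial ℂ :=
  ∑ i ∈ Finset.range k, T ((i : ℤ) * M)

lemma sgen_mul_apply (p : LaurentPolynomial ℂ) (k : ℕ) (M : ℤ) (y : ℤ) :
    (p * sgen k M).coeff y = ∑ i ∈ Finset.range k, p.coeff (y - (i : ℤ) * M) := by
  rw [sgen, Finset.mul_sum, AddMonoidAlgebra.coeff_sum, Finsupp.finset_sum_apply]
  refine Finset.sum_congr rfl fun i _ => ?_
  rw [show (T ((i : ℤ) * M) : LaurentPolynomial ℂ) = AddMonoidAlgebra.single ((i : ℤ) * M) 1 from rfl,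
    AddMonoidAlgebra.coeff_mul_single_apply, mul_one, sub_eq_add_neg]

lemma lconj_sgen (k : ℕ) (M : ℤ) (hk : 0 < k) :
    lconj (sgen k M) = T (-(((k : ℤ) - 1) * M)) * sgen k M := by
  rw [sgen, lconj_sum, Finset.mul_sum]
  have h1 : ∀ i ∈ Finset.range k,
      T (-(((k : ℤ) - 1) * M)) * (T ((i : ℤ) * M) : LaurentPolynomial ℂ)
        = T (-(((k : ℤ) - 1 - i) * M)) := by
    intro i _
    rw [← T_add]
    congr 1
    ring
  simp only [lconj_T]
  rw [Finset.sum_congr rfl h1]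
  rw [← Finset.sum_range_reflect (fun i => (T (-(((i : ℤ)) * M)) : LaurentPolynomial ℂ)) k]
  refine Finset.sum_congr rfl fun i hi => ?_
  have hik : i < k := Finset.mem_range.mp hi
  have : ((k - 1 - i : ℕ) : ℤ) = (k : ℤ) - 1 - i := by omega
  rw [this]

lemma binary_support {p : LaurentPolynomial ℂ} {M : ℤ} (hM : 0 < M)
    (hp : IsBinary p) (hl : len p = M) :
    ∃ a : ℤ, ∀ y : ℤ, p.coeff y ≠ 0 ↔ a ≤ y ∧ y ≤ a + M - 1 := by
  have hp0 : p ≠ 0 := by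
    intro h
    rw [h] at hl
    rw [len, dif_pos rfl] at hl
    omega
  have hne := Finsupp.support_nonempty_iff.mpr fun h' => hp0 (AddMonoidAlgebra.coeff_eq_zero.mp h')
  set a := p.coeff.support.min' hne with ha
  set B := p.coeff.support.max' hne with hB
  have hlen : B - a + 1 = M := by
    rw [len, dif_neg hp0] at hl
    exact hl
  refine ⟨a, fun y => ⟨fun hy => ?_, fun hy => ?_⟩⟩
  · have hmem : y ∈ p.coeff.support := Finsupp.mem_support_iff.mpr hy
    have h1 := p.coeff.support.min'_le y hmem
    have h2 := p.coeff.support.le_max' y hmem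
    constructor <;> omega
  · have hamem : p.coeff a ≠ 0 := Finsupp.mem_support_iff.mp (p.coeff.support.min'_mem hne)
    have hBmem : p.coeff B ≠ 0 := Finsupp.mem_support_iff.mp (p.coeff.support.max'_mem hne)
    exact hp.1 a y B hy.1 (by omega) hamem hBmem

lemma len_of_range {p : LaurentPolynomial ℂ} {a B : ℤ} (hab : a ≤ B)
    (h : ∀ y : ℤ, p.coeff y ≠ 0 ↔ a ≤ y ∧ y ≤ B) : len p = B - a + 1 := by
  have hp0 : p ≠ 0 := by
    intro h0
    have := (h a).mpr ⟨le_refl a, hab⟩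
    rw [h0] at this
    exact this rfl
  rw [len, dif_neg hp0]
  have hmax : p.coeff.support.max' (Finsupp.support_nonempty_iff.mpr
      fun h' => hp0 (AddMonoidAlgebra.coeff_eq_zero.mp h')) = B := by
    apply le_antisymm
    · exact Finset.max'_le _ _ _ fun y hy => ((h y).mp (Finsupp.mem_support_iff.mp hy)).2
    · exact Finset.le_max' _ B (Finsupp.mem_support_iff.mpr ((h B).mpr ⟨hab, le_refl B⟩))
  have hmin : p.coeff.support.min' (Finsupp.support_nonempty_iff.mpr
      fun h' => hp0 (AddMonoidAlgebra.coeff_eq_zero.mp h')) = a := by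
    apply le_antisymm
    · exact Finset.min'_le _ a (Finsupp.mem_support_iff.mpr ((h a).mpr ⟨le_refl a, hab⟩))
    · exact Finset.le_min' _ _ _ fun y hy => ((h y).mp (Finsupp.mem_support_iff.mp hy)).1
  rw [hmax, hmin]

lemma coeff_collapse {p : LaurentPolynomial ℂ} {M : ℤ} (hM : 0 < M) {a : ℤ}
    (hsupp : ∀ y : ℤ, p.coeff y ≠ 0 ↔ a ≤ y ∧ y ≤ a + M - 1)
    {k : ℕ} (hk : 0 < k) (y : ℤ) (hy : a ≤ y ∧ y ≤ a + k * M - 1) :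
    ∃ j : ℤ, a ≤ j ∧ j ≤ a + M - 1 ∧ (p * sgen k M).coeff y = p.coeff j := by
  set q : ℤ := (y - a) / M with hq
  set r : ℤ := (y - a) % M with hr
  have hdm : M * q + r = y - a := Int.mul_ediv_add_emod (y - a) M
  have hr0 : 0 ≤ r := Int.emod_nonneg (y - a) (ne_of_gt hM)
  have hrM : r < M := Int.emod_lt_of_pos (y - a) hM
  have hq0 : 0 ≤ q := Int.ediv_nonneg (by omega) hM.le
  have hqk : q < k := by
    by_contra hc
    push_neg at hc
    have : (k : ℤ) * M ≤ q * M := mul_le_mul_of_nonneg_right hc hM.le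
    nlinarith [hy.2]
  refine ⟨y - q * M, by linarith [hdm, hr0], by linarith [hdm, hrM], ?_⟩
  rw [sgen_mul_apply]
  have hmem : q.toNat ∈ Finset.range k := by
    rw [Finset.mem_range]
    omega
  have hcast : ((q.toNat : ℤ)) = q := Int.toNat_of_nonneg hq0
  rw [Finset.sum_eq_single_of_mem q.toNat hmem ?_]
  · rw [hcast]
  · intro i _ hne
    by_contra hc
    obtain ⟨hA, hB⟩ := (hsupp _).mp hc
    have hiq : (i : ℤ) ≠ q := by
      intro hEq
      apply hne
      omega
    rcases lt_or_gt_of_ne hiq with hlt | hgt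
    · have : ((i : ℤ) + 1) * M ≤ q * M := mul_le_mul_of_nonneg_right (by omega) hM.le
      nlinarith
    · have : (q + 1) * M ≤ (i : ℤ) * M := mul_le_mul_of_nonneg_right (by omega) hM.le
      nlinarith

lemma coeff_zero_outside {p : LaurentPolynomial ℂ} {M : ℤ} (hM : 0 < M) {a : ℤ}
    (hsupp : ∀ y : ℤ, p.coeff y ≠ 0 ↔ a ≤ y ∧ y ≤ a + M - 1)
    {k : ℕ} (hk : 0 < k) (y : ℤ) (hy : ¬(a ≤ y ∧ y ≤ a + k * M - 1)) :
    (p * sgen k M).coeff y = 0 := by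
  rw [sgen_mul_apply]
  refine Finset.sum_eq_zero fun i hi => ?_
  by_contra hc
  obtain ⟨hA, hB⟩ := (hsupp _).mp hc
  have hik : (i : ℤ) ≤ k - 1 := by
    have := Finset.mem_range.mp hi
    omega
  have h2 : (i : ℤ) * M ≤ ((k : ℤ) - 1) * M := mul_le_mul_of_nonneg_right hik hM.le
  have h3 : 0 ≤ (i : ℤ) * M := mul_nonneg (by positivity) hM.le
  exact hy ⟨by linarith, by linarith⟩

lemma assoc_cancel {p q s : LaurentPolynomial ℂ} (hs : s ≠ 0)
    (h : Associated (p * s) (q * s)) : Associated p q := by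
  obtain ⟨u, hu⟩ := h
  exact ⟨u, mul_right_cancel₀ hs (by rw [← hu]; ring)⟩


lemma build_aux {p : LaurentPolynomial ℂ} {M : ℤ} (hM : 0 < M) {a : ℤ}
    (hsupp : ∀ y : ℤ, p.coeff y ≠ 0 ↔ a ≤ y ∧ y ≤ a + M - 1)
    (hp2 : ∀ y : ℤ, p.coeff y ≠ 0 → p.coeff y = 1 ∨ p.coeff y = -1)
    {k : ℕ} (hk : 0 < k) :
    (∀ y : ℤ, (p * sgen k M).coeff y ≠ 0 ↔ a ≤ y ∧ y ≤ a + k * M - 1) ∧ IsBinary (p * sgen k M) := by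
  have hchar : ∀ y : ℤ, (p * sgen k M).coeff y ≠ 0 ↔ a ≤ y ∧ y ≤ a + k * M - 1 := by
    intro y
    constructor
    · intro hy
      by_contra hc
      exact hy (coeff_zero_outside hM hsupp hk y hc)
    · intro hy
      obtain ⟨j, hj1, hj2, hj3⟩ := coeff_collapse hM hsupp hk y hy
      rw [hj3]
      exact (hsupp j).mpr ⟨hj1, hj2⟩
  refine ⟨hchar, ⟨fun i j l h1 h2 hi hl => ?_, fun y hy => ?_⟩⟩
  · exact (hchar j).mpr ⟨le_trans ((hchar i).mp hi).1 h1, le_trans h2 ((hchar l).mp hl).2⟩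
  · have hyr := (hchar y).mp hy
    obtain ⟨j, hj1, hj2, hj3⟩ := coeff_collapse hM hsupp hk y hyr
    rw [hj3]
    exact hp2 j (by rw [hj3] at hy; exact hy)

theorem stmt19 (m n : ℕ) (hm : 0 < m) (hn : 0 < n) (hmn : m ∣ n)
    (h : ∃ b d : LaurentPolynomial ℂ, IsBinary b ∧ IsBinary d ∧
      len b = (m : ℤ) ∧ len d = (m : ℤ) ∧
      Equicorrelational b d ∧ ¬ TrivEquicorrelational b d) :
    ∃ f g : LaurentPolynomial ℂ, IsBinary f ∧ IsBinary g ∧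
      len f = (n : ℤ) ∧ len g = (n : ℤ) ∧
      Equicorrelational f g ∧ ¬ TrivEquicorrelational f g := by
  obtain ⟨b, d, hb, hd, hlb, hld, hcor, hntriv⟩ := h
  obtain ⟨k, hk⟩ := hmn
  have hk0 : 0 < k := by
    rcases Nat.eq_zero_or_pos k with h0 | h0
    · subst h0; simp at hk; omega
    · exact h0
  set M : ℤ := (m : ℤ) with hMdef
  have hMpos : 0 < M := by rw [hMdef]; exact_mod_cast hm
  set s : LaurentPolynomial ℂ := sgen k M with hs
  obtain ⟨a, ha⟩ := binary_support hMpos hb hlb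
  obtain ⟨a', ha'⟩ := binary_support hMpos hd hld
  obtain ⟨hcharb, hbinf⟩ := build_aux hMpos ha hb.2 hk0
  obtain ⟨hchard, hbing⟩ := build_aux hMpos ha' hd.2 hk0
  have hkM : 0 < (k : ℤ) * M := mul_pos (by exact_mod_cast hk0) hMpos
  have hn' : (n : ℤ) = (k : ℤ) * M := by
    rw [hMdef, hk]
    push_cast
    ring
  refine ⟨b * s, d * s, hbinf, hbing, ?_, ?_, ?_, ?_⟩
  · rw [len_of_range (by linarith) hcharb, hn']; ring
  · rw [len_of_range (by linarith) hchard, hn']; ring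
  · obtain ⟨c, hc0, hcc⟩ := hcor
    refine ⟨c, hc0, ?_⟩
    calc (b * s) * lconj (b * s) = (b * lconj b) * (s * lconj s) := by rw [lconj_mul]; ring
      _ = (C (c : ℂ) * (d * lconj d)) * (s * lconj s) := by rw [hcc]
      _ = C (c : ℂ) * ((d * s) * lconj (d * s)) := by rw [lconj_mul]; ring
  · have hf0 : (b * s).coeff a ≠ 0 := (hcharb a).mpr ⟨le_refl _, by linarith⟩
    have hsne : s ≠ 0 := by
      intro h0
      rw [h0, mul_zero] at hf0
      exact hf0 rfl
    intro htr
    rcases htr with h1 | h2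
    · exact hntriv (Or.inl (assoc_cancel hsne h1))
    · have hls : lconj s = T (-(((k : ℤ) - 1) * M)) * s := by
        rw [hs]; exact lconj_sgen k M hk0
      have heq : lconj (b * s) = (lconj b * T (-(((k : ℤ) - 1) * M))) * s := by
        rw [lconj_mul, hls]; ring
      rw [heq] at h2
      have h4 := assoc_cancel hsne h2
      have h5 : Associated d (lconj b) :=
        h4.trans (associated_mul_unit_left (lconj b) _ (isUnit_T _))
      exact hntriv (Or.inr h5)
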